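/- Let w be a positive even integer, n a positive integer, and E a Dedekind symbol of weight w. Define the Hecke operator on Dedekind symbols by (T_n^∞ E)(h,k) = Σ_{ad=n, d>0} Σ_{b=0}^{d−1} E(dh, ak+bh), and on functions f̃ : ℚ → ℂ by (T_n^∞ f̃)(x) = Σ_{ad=n, d>0} d^w Σ_{b=0}^{d−1} f̃((ax+b)/d). Then Ψ_w(T_n^∞ E) = T_n^∞(Ψ_w(E)), i.e., for all (h,k) ∈ ℤ⁺ × ℤ: (T_n^∞ Ψ_w(E))(k/h) = h^{-w}(T_n^∞ E)(h,k). -/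

import Mathlib

theorem stmt_8 (w n : ℕ) (hw : 0 < w) (hweven : Even w) (hn : 0 < n)
    (E : ℤ → ℤ → ℂ)
    (hper : ∀ h k : ℤ, 0 < h → E h (k + h) = E h k)
    (hhom : ∀ c h k : ℤ, 0 < c → 0 < h → E (c * h) (c * k) = (c : ℂ) ^ w * E h k)
    (ψ : ℚ → ℂ)
    (hψ : ∀ h k : ℤ, 0 < h → ψ ((k : ℚ) / (h : ℚ)) = E h k / (h : ℂ) ^ w) :
    ∀ h k : ℤ, 0 < h →
      (∑ d ∈ n.divisors, (d : ℂ) ^ w * ∑ b ∈ Finset.range d,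
          ψ ((((n / d : ℕ) : ℚ) * ((k : ℚ) / (h : ℚ)) + (b : ℚ)) / (d : ℚ))) =
        (∑ d ∈ n.divisors, ∑ b ∈ Finset.range d,
          E ((d : ℤ) * h) (((n / d : ℕ) : ℤ) * k + (b : ℤ) * h)) / (h : ℂ) ^ w := by
  intro h k hh
  rw [Finset.sum_div]
  refine Finset.sum_congr rfl fun d hd => ?_
  have hd0 : 0 < d := Nat.pos_of_mem_divisors hd
  rw [Finset.sum_div, Finset.mul_sum]
  refine Finset.sum_congr rfl fun b hb => ?_
  obtain ⟨a, rfl⟩ := (Nat.mem_divisors.mp hd).1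
  simp only [Nat.mul_div_cancel_left _ hd0]
  have hdh : (0:ℤ) < (d:ℤ) * h := by positivity
  have key := hψ ((d:ℤ)*h) (((a:ℕ):ℤ)*k + (b:ℤ)*h) hdh
  have hhQ : (h:ℚ) ≠ 0 := by exact_mod_cast hh.ne'
  have hdQ : ((d:ℕ):ℚ) ≠ 0 := by exact_mod_cast hd0.ne'
  have harg : (((a:ℕ) : ℚ) * ((k : ℚ) / (h : ℚ)) + (b : ℚ)) / (d : ℚ)
      = (((((a:ℕ):ℤ)*k + (b:ℤ)*h : ℤ)) : ℚ) / ((((d:ℤ)*h : ℤ)) : ℚ) := by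
    push_cast
    rw [div_eq_div_iff hdQ (mul_ne_zero hdQ hhQ), add_mul, mul_comm (↑d) (↑h:ℚ),
      ← mul_assoc, mul_assoc (↑a:ℚ), div_mul_cancel₀ _ hhQ]
    ring
  rw [harg, key]
  have hdC : ((d:ℕ):ℂ) ≠ 0 := by exact_mod_cast hd0.ne'
  have hhC : ((h:ℤ):ℂ) ≠ 0 := by exact_mod_cast hh.ne'
  push_cast
  field_simp [mul_pow]
  ring
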